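/- arXiv:1907.09247 — 4 statements merged into one kernel-verified Lean document; each statement's English description precedes it below -/
import Mathlib

section
/- For any theory Γ and any total belief view W, W is a FAEEL-world view of Γ if and only if W is a FAEEL-world view of the negatively subjective reduct Γ^{W̲}. -/
namespace Epist

attribute [local instance] Classical.propDecidable

/-- Epistemic formulas over a set (type) of atoms `α`. -/
inductive EForm (α : Type) : Type where
  | bot : EForm α
  | atom : α → EForm α
  | and : EForm α → EForm α → EForm α
  | or : EForm α → EForm α → EForm α
  | imp : EForm α → EForm α → EForm α
  | K : EForm α → EForm α

variable {α : Type}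

/-- ¬φ abbreviates φ → ⊥. -/
def EForm.neg (φ : EForm α) : EForm α := .imp φ .bot

/-- ⊤ abbreviates ¬⊥. -/
def EForm.top : EForm α := EForm.neg .bot

/-- Atoms occurring in a formula. -/
def EForm.atoms : EForm α → Set α
  | .bot => ∅
  | .atom a => {a}
  | .and φ ψ => φ.atoms ∪ ψ.atoms
  | .or φ ψ => φ.atoms ∪ ψ.atoms
  | .imp φ ψ => φ.atoms ∪ ψ.atoms
  | .K φ => φ.atoms

/-- A belief view: a set of HT-interpretations ⟨H,T⟩ (as pairs of sets of atoms). -/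
abbrev BView (α : Type) := Set (Set α × Set α)

/-- W^t : the total belief view {⟨T,T⟩ : ⟨H,T⟩ ∈ W}. -/
def tview (W : BView α) : BView α := (fun i => (i.2, i.2)) '' W

/-- Wellformedness of a belief view: nonempty and H ⊆ T for all members. -/
def isBView (W : BView α) : Prop := W.Nonempty ∧ ∀ i ∈ W, i.1 ⊆ i.2

/-- A belief view is total when all its HT-interpretations are total. -/
def totalView (W : BView α) : Prop := ∀ i ∈ W, i.1 = i.2

/-- Satisfaction of an epistemic formula by a belief interpretation ⟨W,H,T⟩. -/
def sat : EForm α → BView α → Set α → Set α → Prop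
  | .bot, _, _, _ => False
  | .atom a, _, H, _ => a ∈ H
  | .and φ ψ, W, H, T => sat φ W H T ∧ sat ψ W H T
  | .or φ ψ, W, H, T => sat φ W H T ∨ sat ψ W H T
  | .imp φ ψ, W, H, T =>
      (sat φ W H T → sat ψ W H T) ∧ (sat φ (tview W) T T → sat ψ (tview W) T T)
  | .K φ, W, _, _ => ∀ i ∈ W, sat φ W i.1 i.2

/-- ⟨W,H',T'⟩ ⊨ φ for all ⟨H',T'⟩ ∈ W. -/
def epSat (W : BView α) (φ : EForm α) : Prop := ∀ i ∈ W, sat φ W i.1 i.2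

/-- W is an epistemic model of the theory Γ. -/
def epModel (W : BView α) (Γ : Set (EForm α)) : Prop :=
  isBView W ∧ ∀ φ ∈ Γ, epSat W φ

/-- ⟨W,H,T⟩ is a belief model of the theory Γ. -/
def beliefModel (W : BView α) (H T : Set α) (Γ : Set (EForm α)) : Prop :=
  isBView W ∧ H ⊆ T ∧ (∀ φ ∈ Γ, sat φ W H T) ∧ ∀ φ ∈ Γ, epSat W φ

/-- Order ⪯ on belief interpretations: ⟨W',H',T'⟩ ⪯ ⟨W,H,T⟩. -/
def biLE (W' : BView α) (H' T' : Set α) (W : BView α) (H T : Set α) : Prop :=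
  (T' = T ∧ H' ⊆ H) ∧
  (∀ i ∈ W, ∃ H₁, (H₁, i.2) ∈ W' ∧ H₁ ⊆ i.1) ∧
  (∀ i ∈ W', ∃ H₁, (H₁, i.2) ∈ W ∧ i.1 ⊆ H₁)

/-- Strict order ≺ on belief interpretations. -/
def biLT (W' : BView α) (H' T' : Set α) (W : BView α) (H T : Set α) : Prop :=
  biLE W' H' T' W H T ∧ (W', H', T') ≠ (W, H, T)

/-- Order ⪯ on belief views. -/
def viewLE (W₁ W₂ : BView α) : Prop :=
  (∀ i ∈ W₂, ∃ H₁, (H₁, i.2) ∈ W₁ ∧ H₁ ⊆ i.1) ∧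
  (∀ i ∈ W₁, ∃ H₂, (H₂, i.2) ∈ W₂ ∧ i.1 ⊆ H₂)

/-- Strict order ≺ on belief views. -/
def viewLT (W₁ W₂ : BView α) : Prop := viewLE W₁ W₂ ∧ W₁ ≠ W₂

/-- ⟨W,T⟩ is an equilibrium belief model of Γ. -/
def eqBeliefModel (Γ : Set (EForm α)) (W : BView α) (T : Set α) : Prop :=
  totalView W ∧ beliefModel W T T Γ ∧
  ∀ W' H' T', beliefModel W' H' T' Γ → ¬ biLT W' H' T' W T T

/-- ⟨W,T⟩ is a weak equilibrium belief model of Γ: no belief-total (i.e. with total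
view) belief model of Γ is ≺-smaller. -/
def weakEqBeliefModel (Γ : Set (EForm α)) (W : BView α) (T : Set α) : Prop :=
  totalView W ∧ beliefModel W T T Γ ∧
  ∀ W' H' T', totalView W' → beliefModel W' H' T' Γ → ¬ biLT W' H' T' W T T

/-- Identification of a set of propositional interpretations with a total belief view. -/
def ofSets (S : Set (Set α)) : BView α := (fun T => (T, T)) '' S

/-- W is a FAEEL-world view of Γ iff W = { T : ⟨W,T⟩ is an equilibrium belief model }. -/
def FAEEL (Γ : Set (EForm α)) (W : BView α) : Prop :=
  isBView W ∧ totalView W ∧ W = ofSets {T | eqBeliefModel Γ W T}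

/-- W is a weak autoepistemic world view of Γ. -/
def weakAEWorldView (Γ : Set (EForm α)) (W : BView α) : Prop :=
  isBView W ∧ totalView W ∧ W = ofSets {T | weakEqBeliefModel Γ W T}

/-- W is a FEEL-world view of Γ. -/
def FEEL (Γ : Set (EForm α)) (W : BView α) : Prop :=
  totalView W ∧ epModel W Γ ∧ ∀ W', epModel W' Γ → ¬ viewLT W' W

/-- A belief view is simple iff ⟨H,T⟩,⟨H',T⟩ ∈ W imply H = H'. -/
def simpleView (W : BView α) : Prop := ∀ i ∈ W, ∀ j ∈ W, i.2 = j.2 → i.1 = j.1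

/-- W is an EEL-world view of Γ. -/
def EEL (Γ : Set (EForm α)) (W : BView α) : Prop :=
  totalView W ∧ epModel W Γ ∧
  ¬ ∃ W', simpleView W' ∧ epModel W' Γ ∧ tview W' = W ∧ ∃ i ∈ W', i.1 ⊂ i.2

/-- Ordinary here-and-there satisfaction (for objective, i.e. K-free, formulas). -/
def htSat (φ : EForm α) (H T : Set α) : Prop := sat φ (∅ : BView α) H T

/-- T is a stable model of the (objective) theory Δ. -/
def stableModel (Δ : Set (EForm α)) (T : Set α) : Prop :=
  (∀ φ ∈ Δ, htSat φ T T) ∧ ∀ H, H ⊂ T → ¬ ∀ φ ∈ Δ, htSat φ H T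

/-- SM[Δ] : the set of stable models of Δ. -/
def SMset (Δ : Set (EForm α)) : Set (Set α) := {T | stableModel Δ T}

/-- Subjective reduct of a formula w.r.t. a belief view W and a signature U:
each maximal subformula Kφ with Atoms(φ) ⊆ U is replaced by ⊤ if W ⊨ Kφ
and by ⊥ otherwise. -/
noncomputable def reduct (W : BView α) (U : Set α) : EForm α → EForm α
  | .bot => .bot
  | .atom a => .atom a
  | .and φ ψ => .and (reduct W U φ) (reduct W U ψ)
  | .or φ ψ => .or (reduct W U φ) (reduct W U ψ)
  | .imp φ ψ => .imp (reduct W U φ) (reduct W U ψ)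
  | .K φ =>
      if φ.atoms ⊆ U then (if epSat W (.K φ) then EForm.top else .bot)
      else .K (reduct W U φ)

/-- W is a G91-world view of Γ iff W = SM[Γ^W]. -/
def G91 (Γ : Set (EForm α)) (W : BView α) : Prop :=
  isBView W ∧ totalView W ∧ W = ofSets (SMset (reduct W Set.univ '' Γ))

/-- Negatively subjective reduct: each maximal subformula ¬Kφ is replaced
by ⊤ if W ⊭ Kφ and by ⊥ otherwise. -/
noncomputable def negReduct (W : BView α) : EForm α → EForm α
  | .bot => .bot
  | .atom a => .atom a
  | .and φ ψ => .and (negReduct W φ) (negReduct W ψ)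
  | .or φ ψ => .or (negReduct W φ) (negReduct W ψ)
  | .imp (.K φ) .bot => if epSat W (.K φ) then .bot else EForm.top
  | .imp φ ψ => .imp (negReduct W φ) (negReduct W ψ)
  | .K φ => .K (negReduct W φ)

/-- Atom, ⊤ or ⊥. -/
def isAtomBase (φ : EForm α) : Prop := (∃ a, φ = .atom a) ∨ φ = EForm.top ∨ φ = .bot

/-- Objective literals: l, ¬l or ¬¬l for l an atom, ⊤ or ⊥. -/
def isObjLit (φ : EForm α) : Prop :=
  isAtomBase φ ∨ (∃ ψ, isAtomBase ψ ∧ φ = EForm.neg ψ) ∨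
    (∃ ψ, isAtomBase ψ ∧ φ = EForm.neg (EForm.neg ψ))

/-- Subjective literals: Kl, ¬Kl or ¬¬Kl for l an objective literal. -/
def isSubjLit (φ : EForm α) : Prop :=
  (∃ l, isObjLit l ∧ φ = .K l) ∨ (∃ l, isObjLit l ∧ φ = EForm.neg (.K l)) ∨
    (∃ l, isObjLit l ∧ φ = EForm.neg (EForm.neg (.K l)))

/-- Positive subjective literals: Kl. -/
def isPosSubjLit (φ : EForm α) : Prop := ∃ l, isObjLit l ∧ φ = .K l

/-- A rule: a head disjunction of atoms and a body list of literals. -/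
structure ERule (α : Type) where
  head : List α
  body : List (EForm α)

/-- Wellformedness of a rule: every body member is an (objective or subjective) literal. -/
def ERule.wf (r : ERule α) : Prop := ∀ φ ∈ r.body, isObjLit φ ∨ isSubjLit φ

/-- Disjunction of atoms (⊥ when empty). -/
def disjForm : List α → EForm α
  | [] => .bot
  | a :: l => .or (.atom a) (disjForm l)

/-- Conjunction of formulas (⊤ when empty). -/
def conjForm : List (EForm α) → EForm α
  | [] => EForm.top
  | φ :: l => .and φ (conjForm l)

/-- The formula Head(r) ← Body(r) corresponding to a rule. -/
def ERule.form (r : ERule α) : EForm α := .imp (conjForm r.body) (disjForm r.head)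

/-- Atoms of Head(r). -/
def ERule.headAtoms (r : ERule α) : Set α := {a | a ∈ r.head}

/-- Atoms of Body_obj(r). -/
def ERule.objBodyAtoms (r : ERule α) : Set α := {a | ∃ φ ∈ r.body, isObjLit φ ∧ a ∈ φ.atoms}

/-- Atoms of Body_sub(r). -/
def ERule.subjBodyAtoms (r : ERule α) : Set α := {a | ∃ φ ∈ r.body, isSubjLit φ ∧ a ∈ φ.atoms}

/-- Atoms of Body⁺_sub(r). -/
def ERule.posSubjBodyAtoms (r : ERule α) : Set α :=
  {a | ∃ φ ∈ r.body, isPosSubjLit φ ∧ a ∈ φ.atoms}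

/-- Atoms(r). -/
def ERule.atoms (r : ERule α) : Set α := r.headAtoms ∪ {a | ∃ φ ∈ r.body, a ∈ φ.atoms}

/-- A rule is objective if all its body literals are objective. -/
def ERule.objective (r : ERule α) : Prop := ∀ φ ∈ r.body, isObjLit φ

/-- A program is a set of rules. -/
abbrev EProgram (α : Type) := Set (ERule α)

def progWF (P : EProgram α) : Prop := ∀ r ∈ P, r.wf

/-- The theory consisting of the formulas of the rules of a program. -/
def progTheory (P : EProgram α) : Set (EForm α) := ERule.form '' P

def progAtoms (P : EProgram α) : Set α := {a | ∃ r ∈ P, a ∈ r.atoms}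

def progObjective (P : EProgram α) : Prop := ∀ r ∈ P, r.objective

/-- U is an epistemic splitting set of P. -/
def splittingSet (P : EProgram α) (U : Set α) : Prop :=
  ∀ r ∈ P, r.atoms ⊆ U ∨ (r.objBodyAtoms ∪ r.headAtoms) ∩ U = ∅

/-- ⟨B,Tp⟩ is a splitting of P w.r.t. U. -/
def isSplitting (P : EProgram α) (U : Set α) (B Tp : EProgram α) : Prop :=
  B ∩ Tp = ∅ ∧ B ∪ Tp = P ∧ (∀ r ∈ B, r.atoms ⊆ U) ∧
    ∀ r ∈ Tp, (r.objBodyAtoms ∪ r.headAtoms) ∩ U = ∅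

/-- Subjective reduct of a rule. -/
noncomputable def ruleReduct (W : BView α) (U : Set α) (r : ERule α) : ERule α :=
  ⟨r.head, r.body.map (reduct W U)⟩

/-- E_U(Π,W) := (T_U(Π))^W_U, here taking the top part Tp as argument. -/
noncomputable def EU (Tp : EProgram α) (W : BView α) (U : Set α) : EProgram α :=
  ruleReduct W U '' Tp

/-- W_b ⊔ W_t (for total belief views: pointwise unions). -/
def vjoin (W₁ W₂ : BView α) : BView α :=
  {i | ∃ j ∈ W₁, ∃ k ∈ W₂, i = (j.1 ∪ k.1, j.2 ∪ k.2)}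

/-- W|_U (for total belief views: pointwise intersection with U). -/
def vrestrict (W : BView α) (U : Set α) : BView α :=
  {i | ∃ j ∈ W, i = (j.1 ∩ U, j.2 ∩ U)}

/-- Epistemic dependence dep(a,b). -/
def dep (P : EProgram α) (a b : α) : Prop :=
  ∃ r ∈ P, a ∈ r.headAtoms ∪ r.objBodyAtoms ∧ b ∈ r.subjBodyAtoms

/-- Positive epistemic dependence dep⁺(a,b). -/
def depPos (P : EProgram α) (a b : α) : Prop :=
  ∃ r ∈ P, a ∈ r.headAtoms ∪ r.objBodyAtoms ∧ b ∈ r.posSubjBodyAtoms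

/-- P is epistemically stratified. -/
def stratified (P : EProgram α) : Prop :=
  ∃ lam : α → ℕ,
    (∀ r ∈ P, ∀ a ∈ r.atoms \ r.subjBodyAtoms, ∀ b ∈ r.atoms \ r.subjBodyAtoms,
      lam a = lam b) ∧
    ∀ a b, dep P a b → lam a > lam b

/-- P is epistemically tight. -/
def tight (P : EProgram α) : Prop :=
  ∃ lam : α → ℕ,
    (∀ r ∈ P, ∀ a ∈ r.atoms \ r.subjBodyAtoms, ∀ b ∈ r.atoms \ r.subjBodyAtoms,
      lam a = lam b) ∧
    ∀ a b, depPos P a b → lam a > lam b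

/-- A semantics S satisfies the epistemic splitting property. -/
def satisfiesSplitting (S : EProgram α → BView α → Prop) : Prop :=
  ∀ P : EProgram α, progWF P → ∀ U : Set α, splittingSet P U →
    ∀ B Tp : EProgram α, isSplitting P U B Tp →
      ∀ W : BView α,
        S P W ↔ ∃ Wb Wt, S B Wb ∧ S (EU Tp Wb U) Wt ∧ W = vjoin Wb Wt

/-- A semantics S satisfies supra-ASP. -/
def supraASP (S : EProgram α → BView α → Prop) : Prop :=
  ∀ P : EProgram α, progWF P → progObjective P →
    (SMset (progTheory P) ≠ ∅ ∧ ∀ W, (S P W ↔ W = ofSets (SMset (progTheory P)))) ∨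
    (SMset (progTheory P) = ∅ ∧ ∀ W, ¬ S P W)

end Epist
namespace Epist


section Aux
attribute [local instance] Classical.propDecidable
variable {α : Type}

lemma tview_tview (W : BView α) : tview (tview W) = tview W := by
  simp [tview, Set.image_image]

lemma tview_eq_self {W : BView α} (hW : totalView W) : tview W = W := by
  ext ⟨H, T⟩
  constructor
  · rintro ⟨⟨a, b⟩, hj, heq⟩
    injection heq with h1 h2
    subst h1; subst h2
    have hab : a = b := hW _ hj
    exact hab ▸ hj
  · intro hi
    have hHT : H = T := hW _ hi
    subst hHT
    exact ⟨(H, H), hi, rfl⟩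

lemma isBView_tview {W : BView α} (h : isBView W) : isBView (tview W) := by
  obtain ⟨⟨j, hj⟩, hsub⟩ := h
  exact ⟨⟨(j.2, j.2), ⟨j, hj, rfl⟩⟩, by rintro i ⟨k, hk, rfl⟩; exact subset_rfl⟩

lemma persistence : ∀ (φ : EForm α) (W : BView α) (H T : Set α),
    (∀ i ∈ W, i.1 ⊆ i.2) → H ⊆ T → sat φ W H T → sat φ (tview W) T T := by
  intro φ
  induction φ with
  | bot => intro W H T _ _ h; exact h
  | atom a => intro W H T _ hHT h; exact hHT h
  | and φ ψ ih1 ih2 =>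
      intro W H T hW hHT h
      exact ⟨ih1 W H T hW hHT h.1, ih2 W H T hW hHT h.2⟩
  | or φ ψ ih1 ih2 =>
      intro W H T hW hHT h
      cases h with
      | inl h => exact Or.inl (ih1 W H T hW hHT h)
      | inr h => exact Or.inr (ih2 W H T hW hHT h)
  | imp φ ψ ih1 ih2 =>
      intro W H T hW hHT h
      exact ⟨h.2, by rw [tview_tview]; exact h.2⟩
  | K φ ih =>
      intro W H T hW hHT h
      rintro i ⟨j, hj, rfl⟩
      exact ih W j.1 j.2 hW (hW j hj) (h j hj)

lemma tview_of_le {W W' : BView α} (hW : totalView W)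
    (h2 : ∀ i ∈ W, ∃ H₁, (H₁, i.2) ∈ W' ∧ H₁ ⊆ i.1)
    (h3 : ∀ i ∈ W', ∃ H₁, (H₁, i.2) ∈ W ∧ i.1 ⊆ H₁) :
    tview W' = W := by
  ext ⟨H, T⟩
  constructor
  · rintro ⟨⟨a, b⟩, hj, heq⟩
    injection heq with h1 h2'
    subst h1; subst h2'
    obtain ⟨H₁, hmem, -⟩ := h3 _ hj
    have hHb : H₁ = b := hW _ hmem
    exact hHb ▸ hmem
  · intro hi
    obtain ⟨H₁, hmem, -⟩ := h2 _ hi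
    have hHT : H = T := hW _ hi
    subst hHT
    exact ⟨(H₁, H), hmem, rfl⟩

lemma negReduct_imp (W : BView α) (φ ψ : EForm α)
    (h : ¬ ∃ χ, φ = .K χ ∧ ψ = .bot) :
    negReduct W (.imp φ ψ) = .imp (negReduct W φ) (negReduct W ψ) := by
  cases φ <;> cases ψ <;>
    first
      | rfl
      | exact absurd ⟨_, rfl, rfl⟩ h

lemma negReduct_sat {W : BView α} (hW : totalView W) :
    ∀ (φ : EForm α) (W' : BView α), isBView W' → tview W' = W →
      ∀ H T, (sat (negReduct W φ) W' H T ↔ sat φ W' H T) := by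
  intro φ
  induction φ with
  | bot => intro W' _ _ H T; exact Iff.rfl
  | atom a => intro W' _ _ H T; exact Iff.rfl
  | and φ ψ ih1 ih2 =>
      intro W' hW' htv H T
      simp only [negReduct, sat, ih1 W' hW' htv, ih2 W' hW' htv]
  | or φ ψ ih1 ih2 =>
      intro W' hW' htv H T
      simp only [negReduct, sat, ih1 W' hW' htv, ih2 W' hW' htv]
  | K φ ih =>
      intro W' hW' htv H T
      simp only [negReduct, sat, ih W' hW' htv]
  | imp φ ψ ih1 ih2 =>
      intro W' hW' htv H T
      have hWb : isBView W := htv ▸ isBView_tview hW'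
      have htW : tview W = W := tview_eq_self hW
      by_cases hsp : ∃ χ, φ = .K χ ∧ ψ = .bot
      · obtain ⟨χ, rfl, rfl⟩ := hsp
        have hred : negReduct W (.imp (.K χ) .bot)
            = if epSat W (.K χ) then .bot else EForm.top := rfl
        by_cases hK : epSat W (.K χ)
        · rw [hred, if_pos hK]
          simp only [sat, htv]
          constructor
          · exact False.elim
          · rintro ⟨_, h2⟩
            exact h2 (fun i hi => hK i hi i hi)
        · rw [hred, if_neg hK]
          simp only [EForm.top, EForm.neg, sat, htv]
          constructor
          · intro _
            constructor
            · intro h1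
              apply hK
              intro i hi j hj
              have hj' : j ∈ tview W' := htv ▸ hj
              obtain ⟨k, hk, rfl⟩ := hj'
              have hp := persistence χ W' k.1 k.2 hW'.2 (hW'.2 k hk) (h1 k hk)
              rwa [htv] at hp
            · intro h
              exact hK (fun i hi j hj => h j hj)
          · intro _
            exact ⟨id, id⟩
      · rw [negReduct_imp W φ ψ hsp]
        simp only [sat, htv]
        constructor
        · rintro ⟨h1, h2⟩
          exact ⟨fun hx => (ih2 W' hW' htv H T).mp (h1 ((ih1 W' hW' htv H T).mpr hx)),
                 fun hx => (ih2 W hWb htW T T).mp (h2 ((ih1 W hWb htW T T).mpr hx))⟩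
        · rintro ⟨h1, h2⟩
          exact ⟨fun hx => (ih2 W' hW' htv H T).mpr (h1 ((ih1 W' hW' htv H T).mp hx)),
                 fun hx => (ih2 W hWb htW T T).mpr (h2 ((ih1 W hWb htW T T).mp hx))⟩

lemma bm_iff {W : BView α} (hW : totalView W) (Γ : Set (EForm α))
    (W'' : BView α) (htv : tview W'' = W) (H' T' : Set α) :
    beliefModel W'' H' T' Γ ↔ beliefModel W'' H' T' (negReduct W '' Γ) := by
  constructor
  · rintro ⟨hb, hHT, hsat, hep⟩
    refine ⟨hb, hHT, ?_, ?_⟩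
    · rintro φ' ⟨φ, hφ, rfl⟩
      exact (negReduct_sat hW φ W'' hb htv H' T').mpr (hsat φ hφ)
    · rintro φ' ⟨φ, hφ, rfl⟩ i hi
      exact (negReduct_sat hW φ W'' hb htv i.1 i.2).mpr (hep φ hφ i hi)
  · rintro ⟨hb, hHT, hsat, hep⟩
    refine ⟨hb, hHT, ?_, ?_⟩
    · intro φ hφ
      exact (negReduct_sat hW φ W'' hb htv H' T').mp (hsat _ ⟨φ, hφ, rfl⟩)
    · intro φ hφ i hi
      exact (negReduct_sat hW φ W'' hb htv i.1 i.2).mp (hep _ ⟨φ, hφ, rfl⟩ i hi)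

lemma eqbm_iff {W : BView α} (hW : totalView W) (Γ : Set (EForm α)) (T : Set α) :
    eqBeliefModel Γ W T ↔ eqBeliefModel (negReduct W '' Γ) W T := by
  have htW : tview W = W := tview_eq_self hW
  constructor
  · rintro ⟨ht, hbm, hmin⟩
    refine ⟨ht, (bm_iff hW Γ W htW T T).mp hbm, ?_⟩
    intro W' H' T' hbm' hlt
    have htv : tview W' = W := tview_of_le hW hlt.1.2.1 hlt.1.2.2
    exact hmin W' H' T' ((bm_iff hW Γ W' htv H' T').mpr hbm') hlt
  · rintro ⟨ht, hbm, hmin⟩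
    refine ⟨ht, (bm_iff hW Γ W htW T T).mpr hbm, ?_⟩
    intro W' H' T' hbm' hlt
    have htv : tview W' = W := tview_of_le hW hlt.1.2.1 hlt.1.2.2
    exact hmin W' H' T' ((bm_iff hW Γ W' htv H' T').mp hbm') hlt

end Aux


/-- W is a FAEEL-world view of Γ iff W is a FAEEL-world view of the
negatively subjective reduct Γ^{W̲}. -/
theorem stmt12 {α : Type} (Γ : Set (EForm α)) (W : BView α) (hW : totalView W) :
    FAEEL Γ W ↔ FAEEL (negReduct W '' Γ) W := by
  have hset : {T | eqBeliefModel Γ W T} = {T | eqBeliefModel (negReduct W '' Γ) W T} := by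
    ext T
    exact eqbm_iff hW Γ T
  unfold FAEEL
  rw [hset]

end Epist
end

section
/- Every FAEEL-world view of any theory Γ is an EEL-world view of Γ, and every FEEL-world view of Γ is an EEL-world view of Γ. -/
namespace Epist

attribute [local instance] Classical.propDecidable

variable {α : Type}

end Epist
namespace Epist
/-- every FAEEL-world view and every FEEL-world view of Γ is an
EEL-world view of Γ. -/
theorem stmt15 {α : Type} (Γ : Set (EForm α)) (W : BView α) :
    (FAEEL Γ W → EEL Γ W) ∧ (FEEL Γ W → EEL Γ W) := by
  constructor
  · rintro ⟨hBV, hTot, hEq⟩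
    refine ⟨hTot, ⟨hBV, ?_⟩, ?_⟩
    · obtain ⟨i, hi⟩ := hBV.1
      rw [hEq] at hi
      obtain ⟨T, hT, rfl⟩ := hi
      exact hT.2.1.2.2.2
    · rintro ⟨W', hSimp, ⟨hBV', hSat'⟩, htv, i, hiW', hsub⟩
      have hiT : (i.2, i.2) ∈ W := by
        rw [← htv]; exact ⟨i, hiW', rfl⟩
      rw [hEq] at hiT
      obtain ⟨T, hT, hTeq⟩ := hiT
      have hT2 : T = i.2 := congrArg Prod.fst hTeq
      subst hT2
      refine hT.2.2 W' i.1 i.2 ?_ ?_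
      · exact ⟨hBV', hsub.subset, fun φ hφ => hSat' φ hφ i hiW', hSat'⟩
      · refine ⟨⟨⟨rfl, hsub.subset⟩, ?_, ?_⟩, ?_⟩
        · intro j hjW
          rw [← htv] at hjW
          obtain ⟨k, hkW', hkeq⟩ := hjW
          refine ⟨k.1, ?_, ?_⟩
          · have : j.2 = k.2 := (congrArg Prod.snd hkeq).symm
            rw [this]; exact hkW'
          · have : j.1 = k.2 := (congrArg Prod.fst hkeq).symm
            rw [this]; exact hBV'.2 k hkW'
        · intro j hjW'
          refine ⟨j.2, ?_, hBV'.2 j hjW'⟩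
          rw [← htv]; exact ⟨j, hjW', rfl⟩
        · intro h
          have h1 : i.1 = i.2 := congrArg (fun p => p.2.1) h
          exact hsub.ne h1
  · rintro ⟨hTot, hEM, hMin⟩
    refine ⟨hTot, hEM, ?_⟩
    rintro ⟨W', hSimp, hEM', htv, i, hiW', hsub⟩
    refine hMin W' hEM' ⟨⟨?_, ?_⟩, ?_⟩
    · intro j hjW
      rw [← htv] at hjW
      obtain ⟨k, hkW', hkeq⟩ := hjW
      refine ⟨k.1, ?_, ?_⟩
      · have : j.2 = k.2 := (congrArg Prod.snd hkeq).symm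
        rw [this]; exact hkW'
      · have : j.1 = k.2 := (congrArg Prod.fst hkeq).symm
        rw [this]; exact hEM'.1.2 k hkW'
    · intro j hjW'
      refine ⟨j.2, ?_, hEM'.1.2 j hjW'⟩
      rw [← htv]; exact ⟨j, hjW', rfl⟩
    · intro h
      subst h
      exact hsub.ne (hTot i hiW')
end Epist
end

section
/- For any theory Γ and any total belief view W, W is a weak autoepistemic world view of Γ if and only if W is a G91-world view of Γ. -/
namespace Epist

attribute [local instance] Classical.propDecidable

variable {α : Type}

end Epist
namespace Epist

lemma tview_total' {α : Type} {W : BView α} (hW : totalView W) : tview W = W := by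
  ext i
  obtain ⟨a, b⟩ := i
  constructor
  · rintro ⟨⟨c, d⟩, hj, heq⟩
    have h : c = d := hW (c, d) hj
    simp only at heq
    obtain ⟨h1, h2⟩ := Prod.mk.injEq .. ▸ heq
    subst h1; subst h2; subst h
    exact hj
  · intro hi
    have h : a = b := hW (a, b) hi
    subst h
    exact ⟨(a, a), hi, rfl⟩

lemma tview_empty' {α : Type} : tview (∅ : BView α) = ∅ := by
  simp [tview]

lemma sat_K_iff' {α : Type} {W : BView α} {φ : EForm α} {H T : Set α} :
    sat (.K φ) W H T ↔ epSat W (.K φ) := by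
  constructor
  · intro h i hi
    exact h
  · intro h j hj
    exact h j hj j hj

lemma sat_top' {α : Type} {W : BView α} {H T : Set α} : sat EForm.top W H T := by
  constructor <;> intro h <;> exact h

lemma sat_reduct' {α : Type} {W : BView α} (hW : totalView W) (φ : EForm α) :
    ∀ H T : Set α, sat φ W H T ↔ htSat (reduct W Set.univ φ) H T := by
  induction φ with
  | bot => intro H T; simp [reduct, sat, htSat]
  | atom a => intro H T; simp [reduct, sat, htSat]
  | and φ ψ ihφ ihψ =>
      intro H T
      simp only [reduct, sat, htSat] at *
      rw [ihφ H T, ihψ H T]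
  | or φ ψ ihφ ihψ =>
      intro H T
      simp only [reduct, sat, htSat] at *
      rw [ihφ H T, ihψ H T]
  | imp φ ψ ihφ ihψ =>
      intro H T
      simp only [reduct, sat, htSat, tview_total' hW, tview_empty'] at *
      rw [ihφ H T, ihψ H T, ihφ T T, ihψ T T]
  | K φ ih =>
      intro H T
      simp only [reduct, Set.subset_univ, if_true]
      by_cases h : epSat W (.K φ)
      · simp only [h, if_true]
        constructor
        · intro _; exact sat_top'
        · intro _; exact sat_K_iff'.mpr h
      · simp only [h, if_false]
        constructor
        · intro hs; exact absurd (sat_K_iff'.mp hs) h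
        · intro hs; exact hs.elim

/-- Key pointwise equivalence under the global epistemic condition. -/
lemma weakEq_iff_stable' {α : Type} {Γ : Set (EForm α)} {W : BView α}
    (hW : totalView W) (hB : isBView W) (hE : ∀ φ ∈ Γ, epSat W φ) (T : Set α) :
    weakEqBeliefModel Γ W T ↔ stableModel (reduct W Set.univ '' Γ) T := by
  constructor
  · rintro ⟨_, ⟨_, _, hsat, _⟩, hmin⟩
    constructor
    · rintro ψ ⟨φ, hφ, rfl⟩
      exact (sat_reduct' hW φ T T).mp (hsat φ hφ)
    · intro H hHT hall
      have hbm : beliefModel W H T Γ :=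
        ⟨hB, hHT.subset, fun φ hφ => (sat_reduct' hW φ H T).mpr (hall _ ⟨φ, hφ, rfl⟩), hE⟩
      have hlt : biLT W H T W T T := by
        refine ⟨⟨⟨rfl, hHT.subset⟩, ?_, ?_⟩, ?_⟩
        · intro i hi
          exact ⟨i.1, by rwa [Prod.mk.eta], subset_rfl⟩
        · intro i hi
          exact ⟨i.1, by rwa [Prod.mk.eta], subset_rfl⟩
        · intro heq
          have : H = T := by
            have := congrArg (fun p : BView α × Set α × Set α => p.2.1) heq
            simpa using this
          exact hHT.ne this
      exact hmin W H T hW hbm hlt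
  · rintro ⟨hsat, hmin⟩
    refine ⟨hW, ⟨hB, subset_rfl,
      fun φ hφ => (sat_reduct' hW φ T T).mpr (hsat _ ⟨φ, hφ, rfl⟩), hE⟩, ?_⟩
    rintro W' H' T' hW' ⟨_, _, hsat', _⟩ ⟨⟨⟨hTT, hHsub⟩, h2, h3⟩, hne⟩
    have hWW : W' = W := by
      ext i
      obtain ⟨a, b⟩ := i
      constructor
      · intro hi
        obtain ⟨H₁, hH₁, hsub⟩ := h3 (a, b) hi
        have e1 : H₁ = b := hW (H₁, b) hH₁
        have e2 : a = b := hW' (a, b) hi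
        rw [e2.trans e1.symm]
        exact hH₁
      · intro hi
        obtain ⟨H₁, hH₁, hsub⟩ := h2 (a, b) hi
        have e1 : H₁ = b := hW' (H₁, b) hH₁
        have e2 : a = b := hW (a, b) hi
        rw [e2.trans e1.symm]
        exact hH₁
    rw [hWW] at hsat' hne
    rw [hTT] at hsat' hne
    have hne' : H' ≠ T := fun h => hne (by rw [h])
    exact hmin H' (ssubset_of_subset_of_ne hHsub hne') (by
      rintro ψ ⟨φ, hφ, rfl⟩
      exact (sat_reduct' hW φ H' T).mp (hsat' φ hφ))

/-- W is a weak autoepistemic world view of Γ iff W is a G91-world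
view of Γ. -/
theorem stmt17 {α : Type} (Γ : Set (EForm α)) (W : BView α) (hW : totalView W) :
    weakAEWorldView Γ W ↔ G91 Γ W := by
  constructor
  · rintro ⟨hB, hTot, hfix⟩
    refine ⟨hB, hTot, ?_⟩
    have hE : ∀ φ ∈ Γ, epSat W φ := by
      obtain ⟨i, hi⟩ := hB.1
      rw [hfix] at hi
      obtain ⟨T, hT, rfl⟩ := hi
      exact hT.2.1.2.2.2
    have hS : {T | weakEqBeliefModel Γ W T} = SMset (reduct W Set.univ '' Γ) :=
      Set.ext fun T => weakEq_iff_stable' hTot hB hE T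
    rw [← hS]
    exact hfix
  · rintro ⟨hB, hTot, hfix⟩
    refine ⟨hB, hTot, ?_⟩
    have hE : ∀ φ ∈ Γ, epSat W φ := by
      intro φ hφ i hi
      have hi' := hi
      rw [hfix] at hi'
      obtain ⟨T, hT, heq⟩ := hi'
      have hs : sat φ W T T := (sat_reduct' hTot φ T T).mpr (hT.1 _ ⟨φ, hφ, rfl⟩)
      have h1 : i.1 = T := by rw [← heq]
      have h2 : i.2 = T := by rw [← heq]
      rw [h1, h2]; exact hs
    have hS : {T | weakEqBeliefModel Γ W T} = SMset (reduct W Set.univ '' Γ) :=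
      Set.ext fun T => weakEq_iff_stable' hTot hB hE T
    rw [hS]
    exact hfix
end Epist
end

section
/- Let Γ be a theory, W a FEEL-world view of Γ, and T a set of atoms with ⟨T,T⟩ ∈ W. If ⟨W,T⟩ is a weak equilibrium belief model of Γ, then ⟨W,T⟩ is an equilibrium belief model of Γ. -/
namespace Epist

attribute [local instance] Classical.propDecidable

variable {α : Type}

end Epist
namespace Epist
/-- if W is a FEEL-world view of Γ, T ∈ W and ⟨W,T⟩ is a weak
equilibrium belief model of Γ, then ⟨W,T⟩ is an equilibrium belief model of Γ. -/
theorem stmt19 {α : Type} (Γ : Set (EForm α)) (W : BView α) (T : Set α)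
    (hF : FEEL Γ W) (hmem : (T, T) ∈ W) (hweak : weakEqBeliefModel Γ W T) :
    eqBeliefModel Γ W T := by
  obtain ⟨htot, hbm0, hmin⟩ := hweak
  refine ⟨htot, hbm0, fun W' H' T' hbm hlt => ?_⟩
  have hW'W : W' = W := by
    by_contra hne
    exact hF.2.2 W' ⟨hbm.1, hbm.2.2.2⟩ ⟨⟨hlt.1.2.1, hlt.1.2.2⟩, hne⟩
  subst hW'W
  exact hmin W' H' T' htot hbm hlt
end Epist
end
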